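/- Let f : ℝⁿ → ℝ be continuously differentiable, let {εₖ} be a sequence of positive reals with εₖ → 0, and let {xₖ} be a sequence with xₖ ≥ 0 (componentwise) converging to x*. Suppose for each k: (a) every component of ∇f(xₖ) is ≥ -εₖ, and (b) ‖Sₖ∇f(xₖ)‖ ≤ εₖ, where Sₖ is the diagonal matrix with Sₖ[i,i] = min{xₖⁱ, 1} if ∇ᵢf(xₖ) > 0 and Sₖ[i,i] = 1 otherwise. Then x* satisfies the first-order optimality conditions for min f(x) s.t. x ≥ 0: for every i, ∇ᵢf(x*) ≥ 0, and if x*ⁱ > 0 then ∇ᵢf(x*) = 0. -/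

import Mathlib

/-- limits of ε-approximate first-order points are first-order optimal. -/
theorem stmt_0 (n : ℕ) (f : (Fin n → ℝ) → ℝ) (hf : ContDiff ℝ 1 f)
    (gradf : (Fin n → ℝ) → Fin n → ℝ)
    (hgrad : ∀ x i, gradf x i = fderiv ℝ f x (Pi.single i 1))
    (ε : ℕ → ℝ) (hεpos : ∀ k, 0 < ε k)
    (hε : Filter.Tendsto ε Filter.atTop (nhds 0))
    (x : ℕ → Fin n → ℝ) (xs : Fin n → ℝ)
    (hxnn : ∀ k i, 0 ≤ x k i)
    (hx : Filter.Tendsto x Filter.atTop (nhds xs))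
    (S : ℕ → Fin n → ℝ)
    (hS : ∀ k i, S k i = if 0 < gradf (x k) i then min (x k i) 1 else 1)
    (ha : ∀ k i, -(ε k) ≤ gradf (x k) i)
    (hb : ∀ k, Real.sqrt (∑ i, (S k i * gradf (x k) i) ^ 2) ≤ ε k) :
    (∀ i, 0 ≤ gradf xs i) ∧ (∀ i, 0 < xs i → gradf xs i = 0) := by
  have hcont : ∀ i, Continuous fun y => gradf y i := by
    intro i
    have h1 : Continuous fun y => fderiv ℝ f y := hf.continuous_fderiv one_ne_zero
    have h2 : Continuous fun y => fderiv ℝ f y (Pi.single i 1) :=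
      h1.clm_apply continuous_const
    simpa only [hgrad] using h2
  have hgtend : ∀ i, Filter.Tendsto (fun k => gradf (x k) i) Filter.atTop
      (nhds (gradf xs i)) := fun i => ((hcont i).tendsto xs).comp hx
  have hpart1 : ∀ i, 0 ≤ gradf xs i := by
    intro i
    have hneg : Filter.Tendsto (fun k => -(ε k)) Filter.atTop (nhds 0) := by
      simpa using hε.neg
    exact le_of_tendsto_of_tendsto' hneg (hgtend i) (fun k => ha k i)
  refine ⟨hpart1, fun i hxs => ?_⟩
  by_contra hne
  have hgpos : 0 < gradf xs i := lt_of_le_of_ne (hpart1 i) (Ne.symm hne)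
  set c := gradf xs i with hc
  set m := min (xs i / 2) 1 with hm
  have hmpos : 0 < m := lt_min (by linarith) one_pos
  -- eventually gradf (x k) i > c/2
  have hev1 : ∀ᶠ k in Filter.atTop, c / 2 < gradf (x k) i :=
    (hgtend i).eventually (eventually_gt_nhds (by linarith))
  -- eventually x k i > xs i / 2
  have hxi : Filter.Tendsto (fun k => x k i) Filter.atTop (nhds (xs i)) :=
    ((continuous_apply i).tendsto xs).comp hx
  have hev2 : ∀ᶠ k in Filter.atTop, xs i / 2 < x k i :=
    hxi.eventually (eventually_gt_nhds (by linarith))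
  -- eventually ε k < m * (c/2)
  have hev3 : ∀ᶠ k in Filter.atTop, ε k < m * (c / 2) :=
    hε.eventually (eventually_lt_nhds (by positivity))
  obtain ⟨k, ⟨h1, h2⟩, h3⟩ := ((hev1.and hev2).and hev3).exists
  -- S k i = min (x k i) 1 ≥ m
  have hgk : 0 < gradf (x k) i := lt_trans (by linarith) h1
  have hSk : S k i = min (x k i) 1 := by rw [hS]; simp [hgk]
  have hSge : m ≤ S k i := by
    rw [hSk]; exact min_le_min (le_of_lt h2) le_rfl
  have hlow : m * (c / 2) ≤ S k i * gradf (x k) i :=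
    mul_le_mul hSge (le_of_lt h1) (by linarith) (le_trans hmpos.le hSge)
  -- upper bound
  have hsq : (S k i * gradf (x k) i) ^ 2 ≤ ∑ j, (S k j * gradf (x k) j) ^ 2 :=
    Finset.single_le_sum (f := fun j => (S k j * gradf (x k) j) ^ 2) (fun j _ => sq_nonneg _) (Finset.mem_univ i)
  have habs : |S k i * gradf (x k) i| ≤ ε k := by
    calc |S k i * gradf (x k) i| = Real.sqrt ((S k i * gradf (x k) i) ^ 2) :=
          (Real.sqrt_sq_eq_abs _).symm
      _ ≤ Real.sqrt (∑ j, (S k j * gradf (x k) j) ^ 2) := Real.sqrt_le_sqrt hsq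
      _ ≤ ε k := hb k
  have := le_abs_self (S k i * gradf (x k) i)
  linarith
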